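/- In the degree-0/1 WLPR setting with n ≥ 2 and weights given by a profile φ, define p₀ : [0, n−1] → ℝ by p₀(t) = φ((2t+1)/λ) / φ(2t/λ) (well defined since (2n−1)/λ < 1). If p₀ is decreasing on [0, n−1], then all coefficients of the difference mask q of S_{1,w^λ} are positive: q_{2j} > 0 and q_{2j+1} > 0 for all j = 1−n,…,n−1. -/

import Mathlib

/-- `‖w⁰‖₁ = 1 + 2 ∑_{l=1}^{n−1} w_{2l}`. -/
noncomputable def normW0 (n : ℕ) (w : ℕ → ℝ) : ℝ :=
  1 + 2 * ∑ l ∈ Finset.Icc 1 (n - 1), w (2 * l)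

/-- `‖w¹‖₁ = 2 ∑_{l=0}^{n−1} w_{2l+1}`. -/
noncomputable def normW1 (n : ℕ) (w : ℕ → ℝ) : ℝ :=
  2 * ∑ l ∈ Finset.Icc 0 (n - 1), w (2 * l + 1)

/-- `q_{2j} = ∑_{l=1−n}^{j} (w_{2|l|}/‖w⁰‖₁ − w_{|2l−1|}/‖w¹‖₁)`. -/
noncomputable def qEven (n : ℕ) (w : ℕ → ℝ) (j : ℤ) : ℝ :=
  ∑ l ∈ Finset.Icc (1 - (n : ℤ)) j,
    (w ((2 * l).natAbs) / normW0 n w - w ((2 * l - 1).natAbs) / normW1 n w)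

/-- `q_{2j+1} = ∑_{l=j}^{n−1} (w_{2|l|}/‖w⁰‖₁ − w_{|2l+1|}/‖w¹‖₁)`. -/
noncomputable def qOdd (n : ℕ) (w : ℕ → ℝ) (j : ℤ) : ℝ :=
  ∑ l ∈ Finset.Icc j ((n : ℤ) - 1),
    (w ((2 * l).natAbs) / normW0 n w - w ((2 * l + 1).natAbs) / normW1 n w)

lemma qOdd_eq_qEven (n : ℕ) (w : ℕ → ℝ) (j : ℤ) : qOdd n w j = qEven n w (-j) := by
  unfold qOdd qEven
  refine Finset.sum_nbij' (fun l => -l) (fun l => -l) ?_ ?_ ?_ ?_ ?_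
  · intro a ha
    simp only [Finset.mem_Icc] at ha ⊢
    omega
  · intro a ha
    simp only [Finset.mem_Icc] at ha ⊢
    omega
  · intro a _; ring
  · intro a _; ring
  · intro a _
    have h1 : (2 * -a).natAbs = (2 * a).natAbs := by omega
    have h2 : (2 * -a - 1).natAbs = (2 * a + 1).natAbs := by omega
    rw [h1, h2]

lemma qEven_pos (n : ℕ) (hn : 2 ≤ n) (w : ℕ → ℝ) (hw0 : w 0 = 1)
    (hpos : ∀ l, l ≤ 2 * n - 1 → 0 < w l)
    (hlc : ∀ a b : ℕ, a ≤ b → b + 1 ≤ 2 * n - 1 → w a * w (b + 1) ≤ w (a + 1) * w b)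
    (j : ℤ) (h1 : 1 - (n : ℤ) ≤ j) (h2 : j ≤ (n : ℤ) - 1) : 0 < qEven n w j := by
  have hIcc0 : Finset.Icc 0 (n - 1) = Finset.Ico 0 n := by
    rw [← Finset.Ico_add_one_right_eq_Icc]; congr 1; omega
  have hIcc1 : Finset.Icc 1 (n - 1) = Finset.Ico 1 n := by
    rw [← Finset.Ico_add_one_right_eq_Icc]; congr 1; omega
  set N0 : ℝ := normW0 n w with hN0def
  set N1 : ℝ := normW1 n w with hN1def
  set S0 : ℝ := ∑ l ∈ Finset.Ico 1 n, w (2 * l) with hS0def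
  set S1 : ℝ := ∑ l ∈ Finset.Ico 0 n, w (2 * l + 1) with hS1def
  have hN0 : N0 = 1 + 2 * S0 := by rw [hN0def, normW0, hIcc1]
  have hN1 : N1 = 2 * S1 := by rw [hN1def, normW1, hIcc0]
  -- positivity of weights
  have hcpos : ∀ k, k ≤ n - 1 → 0 < w (2 * k) := fun k hk => hpos _ (by omega)
  have hdpos : ∀ k, k ≤ n - 1 → 0 < w (2 * k + 1) := fun k hk => hpos _ (by omega)
  have hS0nonneg : 0 ≤ S0 := Finset.sum_nonneg fun l hl => by
    rw [Finset.mem_Ico] at hl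
    exact (hcpos l (by omega)).le
  have hS1pos : 0 < S1 := Finset.sum_pos (fun l hl => by
      rw [Finset.mem_Ico] at hl
      exact hdpos l (by omega)) ⟨0, by simp; omega⟩
  have hN0pos : 0 < N0 := by rw [hN0]; linarith
  have hN1pos : 0 < N1 := by rw [hN1]; linarith
  set u : ℕ → ℝ := fun k => w (2 * k) * N1 - N0 * w (2 * k + 1) with hudef
  set t : ℕ → ℝ := fun k => w (2 * k + 2) * N1 - N0 * w (2 * k + 1) with htdef
  set dn : ℝ := w (2 * (n - 1) + 1) with hdndef
  have hdnpos : 0 < dn := hdpos (n - 1) le_rfl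
  -- sum of c over [0,n)
  have hCsum : ∑ k ∈ Finset.Ico 0 n, w (2 * k) = 1 + S0 := by
    have h := Finset.sum_Ico_consecutive (fun k => w (2 * k)) (Nat.zero_le 1) (by omega : 1 ≤ n)
    have h01 : ∑ k ∈ Finset.Ico 0 1, (fun k => w (2 * k)) k = 1 := by
      rw [show Finset.Ico 0 1 = {0} from rfl, Finset.sum_singleton]
      simpa using hw0
    simp only [] at h h01
    rw [hS0def]
    linarith [h, h01]
  -- shifted sum
  have hshift : ∑ k ∈ Finset.Ico 0 (n - 1), w (2 * k + 2) = S0 := by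
    rw [hS0def, Finset.sum_Ico_eq_sum_range, Finset.sum_Ico_eq_sum_range]
    refine Finset.sum_congr (by first | rfl | (congr 1; omega)) fun i _ => by congr 1; omega
  have hdsum : ∑ k ∈ Finset.Ico 0 (n - 1), w (2 * k + 1) = S1 - dn := by
    have h := Finset.sum_Ico_succ_top (by omega : 0 ≤ n - 1) (fun k => w (2 * k + 1))
    rw [show n - 1 + 1 = n by omega] at h
    rw [hS1def]
    rw [h]; simp [hdndef]
  -- totals
  have hu_total : ∑ k ∈ Finset.Ico 0 n, u k = S1 := by
    rw [hudef]
    rw [Finset.sum_sub_distrib, ← Finset.sum_mul, ← Finset.mul_sum, hCsum]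
    rw [hN0, hN1]; ring
  have ht_total : ∑ k ∈ Finset.Ico 0 (n - 1), t k = N1 * S0 - N0 * (S1 - dn) := by
    rw [htdef]
    rw [Finset.sum_sub_distrib, ← Finset.sum_mul, ← Finset.mul_sum, hshift, hdsum]
    ring
  -- sign propagation for u
  have husign : ∀ p q : ℕ, p ≤ q → q ≤ n - 1 → 0 ≤ u p → 0 ≤ u q := by
    intro p q hpq hq hup
    have hcross := hlc (2 * p) (2 * q) (by omega) (by omega)
    rw [show 2 * q + 1 = 2 * q + 1 from rfl] at hcross
    have h1 : 0 < w (2 * p) := hcpos p (by omega)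
    have h2 : 0 < w (2 * p + 1) := hdpos p (by omega)
    have h3 : 0 < w (2 * q) := hcpos q hq
    have h4 : 0 < w (2 * q + 1) := hdpos q hq
    have hup' : N0 * w (2 * p + 1) ≤ w (2 * p) * N1 := by
      rw [hudef] at hup; simp only [] at hup; linarith
    simp only [hudef]
    nlinarith [mul_le_mul_of_nonneg_left hcross hN0pos.le,
      mul_le_mul_of_nonneg_right hup' h4.le]
  -- sign propagation for t (negative direction)
  have htsign : ∀ p q : ℕ, p ≤ q → q + 1 ≤ n - 1 → t p ≤ 0 → t q ≤ 0 := by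
    intro p q hpq hq htp
    have hcross := hlc (2 * p + 1) (2 * q + 1) (by omega) (by omega)
    have h1 : 0 < w (2 * p + 1) := hdpos p (by omega)
    have h2 : 0 < w (2 * p + 2) := hpos _ (by omega)
    have h3 : 0 < w (2 * q + 1) := hdpos q (by omega)
    have h4 : 0 < w (2 * q + 2) := hpos _ (by omega)
    have htp' : w (2 * p + 2) * N1 ≤ N0 * w (2 * p + 1) := by
      rw [htdef] at htp; simp only [] at htp; linarith
    simp only [htdef]
    nlinarith [mul_le_mul_of_nonneg_left hcross hN1pos.le,
      mul_le_mul_of_nonneg_right htp' h3.le]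
  -- last term of u is positive
  have hulast : 0 < u (n - 1) := by
    have hterm : ∀ k ∈ Finset.Ico 0 n, w (2 * k) * dn ≤ w (2 * k + 1) * w (2 * (n - 1)) := by
      intro k hk
      rw [Finset.mem_Ico] at hk
      have h := hlc (2 * k) (2 * (n - 1)) (by omega) (by omega)
      rw [show 2 * (n - 1) + 1 = 2 * (n - 1) + 1 from rfl] at h
      simpa [hdndef] using h
    have hsum := Finset.sum_le_sum hterm
    rw [← Finset.sum_mul, ← Finset.sum_mul, hCsum] at hsum
    have hc : 0 < w (2 * (n - 1)) := hcpos (n - 1) le_rfl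
    simp only [hudef, ← hdndef]
    rw [hN0, hN1]
    nlinarith
  -- reindexing lemma for the nonpositive part
  have RA : ∀ jj : ℤ, 1 - (n : ℤ) ≤ jj → jj ≤ 0 →
      ∑ l ∈ Finset.Icc (1 - (n : ℤ)) jj,
        (w ((2 * l).natAbs) / N0 - w ((2 * l - 1).natAbs) / N1)
      = (∑ k ∈ Finset.Ico (-jj).toNat n, u k) / (N0 * N1) := by
    intro jj hj1 hj2
    rw [Finset.sum_div]
    refine Finset.sum_nbij' (fun l => (-l).toNat) (fun k => -(k : ℤ)) ?_ ?_ ?_ ?_ ?_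
    · intro a ha; simp only [Finset.mem_Icc] at ha; simp only [Finset.mem_Ico]; omega
    · intro a ha; simp only [Finset.mem_Ico] at ha; simp only [Finset.mem_Icc]; omega
    · intro a ha; simp only [Finset.mem_Icc] at ha
      show -(((-a).toNat : ℤ)) = a; omega
    · intro a ha; simp only [Finset.mem_Ico] at ha
      show (-(-(a : ℤ))).toNat = a; omega
    · intro a ha
      simp only [Finset.mem_Icc] at ha
      rw [show (2 * a).natAbs = 2 * (-a).toNat by omega,
        show (2 * a - 1).natAbs = 2 * (-a).toNat + 1 by omega,
        div_sub_div _ _ (ne_of_gt hN0pos) (ne_of_gt hN1pos)]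
  -- reindexing lemma for the positive part
  have RB : ∀ jj : ℤ, 0 ≤ jj → jj ≤ (n : ℤ) - 1 →
      ∑ l ∈ Finset.Ioc jj ((n : ℤ) - 1),
        (w ((2 * l).natAbs) / N0 - w ((2 * l - 1).natAbs) / N1)
      = (∑ k ∈ Finset.Ico jj.toNat (n - 1), t k) / (N0 * N1) := by
    intro jj hj1 hj2
    rw [Finset.sum_div]
    refine Finset.sum_nbij' (fun l => (l - 1).toNat) (fun k => (k : ℤ) + 1) ?_ ?_ ?_ ?_ ?_
    · intro a ha; simp only [Finset.mem_Ioc] at ha; simp only [Finset.mem_Ico]; omega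
    · intro a ha; simp only [Finset.mem_Ico] at ha; simp only [Finset.mem_Ioc]; omega
    · intro a ha; simp only [Finset.mem_Ioc] at ha
      show ((a - 1).toNat : ℤ) + 1 = a; omega
    · intro a ha; simp only [Finset.mem_Ico] at ha
      show (((a : ℤ) + 1) - 1).toNat = a; omega
    · intro a ha
      simp only [Finset.mem_Ioc] at ha
      rw [show (2 * a).natAbs = 2 * (a - 1).toNat + 2 by omega,
        show (2 * a - 1).natAbs = 2 * (a - 1).toNat + 1 by omega,
        div_sub_div _ _ (ne_of_gt hN0pos) (ne_of_gt hN1pos)]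
  rw [qEven]
  rw [← hN0def, ← hN1def]
  rcases le_or_gt j 0 with hj | hj
  · -- case j ≤ 0
    rw [RA j h1 hj]
    set m : ℕ := (-j).toNat with hmdef
    have hm : m ≤ n - 1 := by omega
    apply div_pos _ (mul_pos hN0pos hN1pos)
    rcases le_or_gt 0 (u m) with hum | hum
    · apply Finset.sum_pos'
      · intro k hk
        rw [Finset.mem_Ico] at hk
        exact husign m k hk.1 (by omega) hum
      · exact ⟨n - 1, by rw [Finset.mem_Ico]; omega, hulast⟩
    · have hhead : ∑ k ∈ Finset.Ico 0 m, u k ≤ 0 := by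
        apply Finset.sum_nonpos
        intro k hk
        rw [Finset.mem_Ico] at hk
        by_contra hk'
        exact absurd (husign k m (by omega) hm (le_of_not_ge hk')) (not_le.mpr hum)
      have hsplit := Finset.sum_Ico_consecutive u (by omega : 0 ≤ m) (by omega : m ≤ n)
      rw [hu_total] at hsplit
      linarith
  · -- case j ≥ 1
    set m : ℕ := j.toNat with hmdef
    have hm1 : 1 ≤ m := by omega
    have hm : m ≤ n - 1 := by omega
    have hsplitIcc : Finset.Icc (1 - (n : ℤ)) ((n : ℤ) - 1)
        = Finset.Icc (1 - (n : ℤ)) j ∪ Finset.Ioc j ((n : ℤ) - 1) := by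
      ext x
      simp only [Finset.mem_union, Finset.mem_Icc, Finset.mem_Ioc]
      omega
    have hdisj : Disjoint (Finset.Icc (1 - (n : ℤ)) j) (Finset.Ioc j ((n : ℤ) - 1)) := by
      rw [Finset.disjoint_left]
      intro x hx hx'
      simp only [Finset.mem_Icc] at hx
      simp only [Finset.mem_Ioc] at hx'
      omega
    have htotal : ∑ l ∈ Finset.Icc (1 - (n : ℤ)) ((n : ℤ) - 1),
        (w ((2 * l).natAbs) / N0 - w ((2 * l - 1).natAbs) / N1)
        = (∑ k ∈ Finset.Ico 0 n, u k + ∑ k ∈ Finset.Ico 0 (n - 1), t k) / (N0 * N1) := by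
      have e0 : Finset.Icc (1 - (n : ℤ)) ((n : ℤ) - 1)
          = Finset.Icc (1 - (n : ℤ)) 0 ∪ Finset.Ioc 0 ((n : ℤ) - 1) := by
        ext x
        simp only [Finset.mem_union, Finset.mem_Icc, Finset.mem_Ioc]
        omega
      have e1 : Disjoint (Finset.Icc (1 - (n : ℤ)) 0) (Finset.Ioc 0 ((n : ℤ) - 1)) := by
        rw [Finset.disjoint_left]
        intro x hx hx'
        simp only [Finset.mem_Icc] at hx
        simp only [Finset.mem_Ioc] at hx'
        omega
      rw [e0, Finset.sum_union e1, RA 0 (by omega) le_rfl, RB 0 le_rfl (by omega)]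
      rw [show ((0 : ℤ)).toNat = 0 from rfl, show (-(0:ℤ)).toNat = 0 by rfl]
      rw [← add_div]
    have hqe : ∑ l ∈ Finset.Icc (1 - (n : ℤ)) j,
        (w ((2 * l).natAbs) / N0 - w ((2 * l - 1).natAbs) / N1)
        = (∑ k ∈ Finset.Ico 0 n, u k + ∑ k ∈ Finset.Ico 0 m, t k) / (N0 * N1) := by
      have hthis := Finset.sum_union hdisj (f := fun l =>
        (w ((2 * l).natAbs) / N0 - w ((2 * l - 1).natAbs) / N1))
      rw [← hsplitIcc, htotal, RB j (by omega) h2] at hthis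
      rw [← hmdef] at hthis
      have hts := Finset.sum_Ico_consecutive t (by omega : 0 ≤ m) (by omega : m ≤ n - 1)
      have step : ∑ l ∈ Finset.Icc (1 - (n : ℤ)) j,
          (w ((2 * l).natAbs) / N0 - w ((2 * l - 1).natAbs) / N1)
          = (∑ k ∈ Finset.Ico 0 n, u k + ∑ k ∈ Finset.Ico 0 (n - 1), t k) / (N0 * N1)
            - (∑ k ∈ Finset.Ico m (n - 1), t k) / (N0 * N1) := by
        linarith [hthis]
      rw [step, div_sub_div_same]
      congr 1
      linarith [hts]
    rw [hqe]
    apply div_pos _ (mul_pos hN0pos hN1pos)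
    have hkey : ∑ k ∈ Finset.Ico 0 n, u k + ∑ k ∈ Finset.Ico 0 (n - 1), t k = N0 * dn := by
      rw [hu_total, ht_total, hN0, hN1]; ring
    by_cases hm2 : m ≤ n - 2
    · rcases le_or_gt (t m) 0 with htm | htm
      · -- tail of t nonpositive: value = N0*dn - tail ≥ N0*dn > 0
        have htail : ∑ k ∈ Finset.Ico m (n - 1), t k ≤ 0 := by
          apply Finset.sum_nonpos
          intro k hk
          rw [Finset.mem_Ico] at hk
          exact htsign m k hk.1 (by omega) htm
        have hts := Finset.sum_Ico_consecutive t (by omega : 0 ≤ m) (by omega : m ≤ n - 1)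
        linarith [mul_pos hN0pos hdnpos, hts, htail, hkey]
      · -- head of t positive
        have hhead : 0 ≤ ∑ k ∈ Finset.Ico 0 m, t k := by
          apply Finset.sum_nonneg
          intro k hk
          rw [Finset.mem_Ico] at hk
          by_contra hk'
          have := htsign k m (by omega) (by omega) (le_of_not_ge fun h => hk' h)
          exact absurd this (not_le.mpr htm)
        linarith [hu_total, hS1pos, hhead]
    · -- m = n - 1
      have hmeq : m = n - 1 := by omega
      rw [hmeq]
      linarith [mul_pos hN0pos hdnpos, hkey]

/-- in the degree-0/1 WLPR setting with weight profile `φ : [0,1] → (0,1]`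
decreasing, `φ(0) = 1`, `n ≥ 2`, `λ ∈ (2n−1, 2n)` and weights `w_l = φ(l/λ)`, if the
function `p₀(t) = φ((2t+1)/λ)/φ(2t/λ)` is decreasing on `[0, n−1]`, then all
coefficients of the difference mask of `S_{1,w^λ}` are positive:
`q_{2j} > 0` and `q_{2j+1} > 0` for all `j = 1−n,…,n−1`. -/
theorem stmt10 (n : ℕ) (hn : 2 ≤ n) (lam : ℝ)
    (hlam1 : 2 * (n : ℝ) - 1 < lam) (hlam2 : lam < 2 * n)
    (φ : ℝ → ℝ)
    (hφrange : ∀ x ∈ Set.Icc (0 : ℝ) 1, 0 < φ x ∧ φ x ≤ 1)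
    (hφ0 : φ 0 = 1)
    (hφanti : AntitoneOn φ (Set.Icc (0 : ℝ) 1))
    (hp0 : AntitoneOn (fun t : ℝ => φ ((2 * t + 1) / lam) / φ (2 * t / lam))
      (Set.Icc (0 : ℝ) ((n : ℝ) - 1))) :
    ∀ j : ℤ, 1 - (n : ℤ) ≤ j → j ≤ (n : ℤ) - 1 →
      0 < qEven n (fun l => φ ((l : ℝ) / lam)) j ∧
      0 < qOdd n (fun l => φ ((l : ℝ) / lam)) j := by
  intro j hj1 hj2
  have hn2 : (2 : ℝ) ≤ (n : ℝ) := by exact_mod_cast hn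
  have hlampos : 0 < lam := by linarith
  have hcast : ∀ l : ℕ, l ≤ 2 * n - 1 → (l : ℝ) ≤ 2 * (n : ℝ) - 1 := by
    intro l hl
    have h1 : (l : ℝ) ≤ ((2 * n - 1 : ℕ) : ℝ) := Nat.cast_le.mpr hl
    rwa [Nat.cast_sub (by omega : 1 ≤ 2 * n), Nat.cast_mul, Nat.cast_two, Nat.cast_one] at h1
  have hmem : ∀ l : ℕ, l ≤ 2 * n - 1 → ((l : ℝ) / lam) ∈ Set.Icc (0 : ℝ) 1 := by
    intro l hl
    constructor
    · positivity
    · rw [div_le_one hlampos]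
      linarith [hcast l hl]
  have hwpos : ∀ l, l ≤ 2 * n - 1 → 0 < (fun l : ℕ => φ ((l : ℝ) / lam)) l :=
    fun l hl => (hφrange _ (hmem l hl)).1
  have hw0 : (fun l : ℕ => φ ((l : ℝ) / lam)) 0 = 1 := by
    simp only [Nat.cast_zero, zero_div, hφ0]
  have hlc : ∀ a b : ℕ, a ≤ b → b + 1 ≤ 2 * n - 1 →
      (fun l : ℕ => φ ((l : ℝ) / lam)) a * (fun l : ℕ => φ ((l : ℝ) / lam)) (b + 1)
      ≤ (fun l : ℕ => φ ((l : ℝ) / lam)) (a + 1) * (fun l : ℕ => φ ((l : ℝ) / lam)) b := by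
    intro a b hab hb
    simp only []
    have hmema : ((a : ℝ) / 2) ∈ Set.Icc (0 : ℝ) ((n : ℝ) - 1) := by
      constructor
      · positivity
      · have := hcast a (by omega)
        have ha' : (a : ℝ) ≤ 2 * (n : ℝ) - 2 := by
          have h1 : (a : ℝ) ≤ ((2 * n - 2 : ℕ) : ℝ) := Nat.cast_le.mpr (by omega)
          rwa [Nat.cast_sub (by omega : 2 ≤ 2 * n), Nat.cast_mul, Nat.cast_two] at h1
        linarith
    have hmemb : ((b : ℝ) / 2) ∈ Set.Icc (0 : ℝ) ((n : ℝ) - 1) := by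
      constructor
      · positivity
      · have hb' : (b : ℝ) ≤ 2 * (n : ℝ) - 2 := by
          have h1 : (b : ℝ) ≤ ((2 * n - 2 : ℕ) : ℝ) := Nat.cast_le.mpr (by omega)
          rwa [Nat.cast_sub (by omega : 2 ≤ 2 * n), Nat.cast_mul, Nat.cast_two] at h1
        linarith
    have h := hp0 hmema hmemb (by
      have : (a : ℝ) ≤ (b : ℝ) := Nat.cast_le.mpr hab
      linarith)
    simp only [] at h
    rw [show 2 * ((b : ℝ) / 2) = (b : ℝ) by ring,
      show 2 * ((a : ℝ) / 2) = (a : ℝ) by ring] at h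
    have ha0 : 0 < φ ((a : ℝ) / lam) := (hφrange _ (hmem a (by omega))).1
    have hb0 : 0 < φ ((b : ℝ) / lam) := (hφrange _ (hmem b (by omega))).1
    rw [div_le_div_iff₀ hb0 ha0] at h
    have hca : ((a + 1 : ℕ) : ℝ) = (a : ℝ) + 1 := by push_cast; ring
    have hcb : ((b + 1 : ℕ) : ℝ) = (b : ℝ) + 1 := by push_cast; ring
    rw [hca, hcb]
    nlinarith [h]
  refine ⟨qEven_pos n hn _ hw0 hwpos hlc j hj1 hj2, ?_⟩
  rw [qOdd_eq_qEven]
  exact qEven_pos n hn _ hw0 hwpos hlc (-j) (by omega) (by omega)
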